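/- arXiv:1606.06793 — 5 statements merged into one kernel-verified Lean document; each statement's English description precedes it below -/
import Mathlib

section
/- Let p ≥ 1 and a, b > 0 be real numbers, and define f(x; a, b, p) = a·x^{p−1} − x + b for x ≥ 0. Then: (i) if p < 2 and M = max(1, (a+b)^{1/(2−p)}), then f(M; a, b, p) ≤ 0; (ii) if p = 2 and a < 1 and M = b/(1−a), then f(M; a, b, p) ≤ 0; (iii) if p > 2 and a·b^{p−2} ≤ (p−2)^{p−2}/(p−1)^{p−1}, and M = (1/((p−1)a))^{1/(p−2)}, then f(M; a, b, p) ≤ 0. -/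
theorem stmt_1 (p a b : ℝ) (hp : 1 ≤ p) (ha : 0 < a) (hb : 0 < b) :
    (p < 2 →
      (fun M : ℝ => a * M ^ (p - 1) - M + b) (max 1 ((a + b) ^ (1 / (2 - p)))) ≤ 0) ∧
    (p = 2 → a < 1 →
      (fun M : ℝ => a * M ^ (p - 1) - M + b) (b / (1 - a)) ≤ 0) ∧
    (2 < p → a * b ^ (p - 2) ≤ (p - 2) ^ (p - 2) / (p - 1) ^ (p - 1) →
      (fun M : ℝ => a * M ^ (p - 1) - M + b) ((1 / ((p - 1) * a)) ^ (1 / (p - 2))) ≤ 0) := by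
  refine ⟨?_, ?_, ?_⟩
  · -- case p < 2
    intro hp2
    simp only
    set M : ℝ := max 1 ((a + b) ^ (1 / (2 - p))) with hMdef
    have h2p : 0 < 2 - p := by linarith
    have hab : 0 < a + b := by linarith
    have hM1 : 1 ≤ M := le_max_left _ _
    have hM0 : 0 < M := lt_of_lt_of_le one_pos hM1
    -- a + b ≤ M ^ (2 - p)
    have hroundtrip : ((a + b) ^ (1 / (2 - p))) ^ (2 - p) = a + b := by
      rw [← Real.rpow_mul hab.le, one_div, inv_mul_cancel₀ h2p.ne', Real.rpow_one]
    have habM : a + b ≤ M ^ (2 - p) := by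
      calc a + b = ((a + b) ^ (1 / (2 - p))) ^ (2 - p) := hroundtrip.symm
        _ ≤ M ^ (2 - p) :=
          Real.rpow_le_rpow (Real.rpow_nonneg hab.le _) (le_max_right _ _) h2p.le
    have hMp1 : 1 ≤ M ^ (p - 1) := by
      calc (1 : ℝ) = (1 : ℝ) ^ (p - 1) := (Real.one_rpow _).symm
        _ ≤ M ^ (p - 1) := Real.rpow_le_rpow zero_le_one hM1 (by linarith)
    have hmul : M ^ (2 - p) * M ^ (p - 1) = M := by
      rw [← Real.rpow_add hM0]
      norm_num
    have hMp1nn : (0 : ℝ) ≤ M ^ (p - 1) := by positivity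
    nlinarith [mul_le_mul_of_nonneg_right habM hMp1nn]
  · -- case p = 2
    intro hp2 ha1
    subst hp2
    simp only
    have h1a : 0 < 1 - a := by linarith
    rw [show (2 : ℝ) - 1 = 1 by norm_num, Real.rpow_one]
    have : a * (b / (1 - a)) - b / (1 - a) + b = 0 := by
      field_simp
      ring
    linarith
  · -- case p > 2
    intro hp2 hcond
    simp only
    have hp2' : 0 < p - 2 := by linarith
    have hp1 : 0 < p - 1 := by linarith
    have hc : 0 < 1 / ((p - 1) * a) := by positivity
    set M : ℝ := (1 / ((p - 1) * a)) ^ (1 / (p - 2)) with hMdef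
    have hM0 : 0 < M := Real.rpow_pos_of_pos hc _
    have hMpow : M ^ (p - 2) = 1 / ((p - 1) * a) := by
      rw [hMdef, ← Real.rpow_mul hc.le, one_div (p - 2), inv_mul_cancel₀ hp2'.ne',
        Real.rpow_one]
    have hMp1 : M ^ (p - 1) = M / ((p - 1) * a) := by
      have : M ^ (p - 1) = M ^ (p - 2) * M := by
        rw [← Real.rpow_add_one hM0.ne' (p - 2)]
        ring_nf
      rw [this, hMpow]; ring
    -- key inequality: b * (p - 1) / (p - 2) ≤ M
    have hB : (0 : ℝ) ≤ b * (p - 1) / (p - 2) := by positivity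
    have hpowineq : (b * (p - 1) / (p - 2)) ^ (p - 2) ≤ 1 / ((p - 1) * a) := by
      have hrw : (b * (p - 1) / (p - 2)) ^ (p - 2)
          = b ^ (p - 2) * (p - 1) ^ (p - 2) / (p - 2) ^ (p - 2) := by
        rw [Real.div_rpow (by positivity) hp2'.le, Real.mul_rpow hb.le hp1.le]
      rw [hrw]
      have hp1pow : (p - 1) ^ (p - 1) = (p - 1) ^ (p - 2) * (p - 1) := by
        rw [← Real.rpow_add_one hp1.ne' (p - 2)]; ring_nf
      have hbpos : 0 < b ^ (p - 2) := Real.rpow_pos_of_pos hb _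
      have hp1pos : 0 < (p - 1) ^ (p - 2) := Real.rpow_pos_of_pos hp1 _
      have hp2pos : 0 < (p - 2) ^ (p - 2) := Real.rpow_pos_of_pos hp2' _
      rw [hp1pow] at hcond
      rw [div_le_div_iff₀ (by positivity) (by positivity)]
      rw [le_div_iff₀ (by positivity)] at hcond
      nlinarith [hcond]
    have hkey : b * (p - 1) / (p - 2) ≤ M := by
      have h1 : ((b * (p - 1) / (p - 2)) ^ (p - 2)) ^ (1 / (p - 2))
          ≤ (1 / ((p - 1) * a)) ^ (1 / (p - 2)) :=
        Real.rpow_le_rpow (by positivity) hpowineq (by positivity)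
      have h2 : ((b * (p - 1) / (p - 2)) ^ (p - 2)) ^ (1 / (p - 2))
          = b * (p - 1) / (p - 2) := by
        rw [← Real.rpow_mul hB, mul_one_div, div_self hp2'.ne', Real.rpow_one]
      rw [h2] at h1
      exact h1
    rw [hMp1]
    rw [div_le_iff₀ hp2'] at hkey
    have hfin : a * (M / ((p - 1) * a)) * (p - 1) = M := by
      field_simp
    nlinarith [hkey, hfin, hp1]
end

section
/- Let p ≥ 1 and a, b > 0 be real numbers, and let M > 0 be a real number satisfying a·M^{p−1} − M + b ≤ 0. Let (s_t)_{t≥1} be a sequence of nonnegative real numbers with s_1 = 0 such that for every t ≥ 1, s_{t+1} ≤ ((t−1)/(t+1))·s_t + 2b/(t+1) + 2a·s_t^{p−1}/(t+1). Then s_t ≤ M for every t ≥ 1. -/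
theorem stmt_2 (p a b M : ℝ) (hp : 1 ≤ p) (ha : 0 < a) (hb : 0 < b) (hM : 0 < M)
    (hfM : a * M ^ (p - 1) - M + b ≤ 0)
    (s : ℕ → ℝ) (hs_nonneg : ∀ t, 0 ≤ s t) (hs1 : s 1 = 0)
    (hrec : ∀ t : ℕ, 1 ≤ t →
      s (t + 1) ≤ (((t : ℝ) - 1) / ((t : ℝ) + 1)) * s t + 2 * b / ((t : ℝ) + 1)
        + 2 * a * (s t) ^ (p - 1) / ((t : ℝ) + 1)) :
    ∀ t : ℕ, 1 ≤ t → s t ≤ M := by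
  intro t ht
  induction t with
  | zero => omega
  | succ n ih =>
    rcases Nat.eq_or_lt_of_le ht with h | h
    · have hn0 : n = 0 := by omega
      subst hn0
      simpa [hs1] using hM.le
    · have hn : 1 ≤ n := by omega
      have ihn := ih hn
      have ht1 : (0:ℝ) < (n:ℝ) + 1 := by positivity
      have hpow : s n ^ (p - 1) ≤ M ^ (p - 1) :=
        Real.rpow_le_rpow (hs_nonneg n) ihn (by linarith)
      have hfrac : (0:ℝ) ≤ ((n:ℝ) - 1) / ((n:ℝ) + 1) := by
        apply div_nonneg _ ht1.le
        have : (1:ℝ) ≤ (n:ℝ) := by exact_mod_cast hn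
        linarith
      have h1 := hrec n hn
      have h2 : s (n + 1) ≤ ((n:ℝ) - 1) / ((n:ℝ) + 1) * M + 2 * b / ((n:ℝ) + 1)
          + 2 * a * M ^ (p - 1) / ((n:ℝ) + 1) := by
        have := mul_le_mul_of_nonneg_left ihn hfrac
        have h3 : 2 * a * s n ^ (p - 1) / ((n:ℝ) + 1)
            ≤ 2 * a * M ^ (p - 1) / ((n:ℝ) + 1) := by
          gcongr
        linarith
      have hkey : ((n:ℝ) - 1) / ((n:ℝ) + 1) * M + 2 * b / ((n:ℝ) + 1)
          + 2 * a * M ^ (p - 1) / ((n:ℝ) + 1) ≤ M := by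
        rw [div_mul_eq_mul_div, ← add_div, ← add_div, div_le_iff₀ ht1]
        nlinarith
      linarith
end

section
/- Let H be a real inner product space, let p ≥ 1, and let A, R, C, C' > 0 be real numbers. Set a = C'·(2R)^p·p and b = C·A, and let M > 0 be a real number satisfying a·M^{p−1} − M + b ≤ 0. Let (w_t)_{t≥1} be a sequence in H with w_1 = 0 such that for every t ≥ 1 there exist u_t, Φ_t ∈ H and μ_t ∈ [0,1] with ‖u_t‖ ≤ A and ‖Φ_t‖ ≤ 2R, and w_{t+1} = ((t−1)/(t+1))·w_t − (2C/(t+1))·u_t − (2C'·μ_t/(t+1))·p·sign(⟨w_t, Φ_t⟩)·|⟨w_t, Φ_t⟩|^{p−1}·Φ_t. Then ‖w_t‖ ≤ M for every t ≥ 1. -/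
open RealInnerProductSpace

theorem stmt_3 {H : Type*} [NormedAddCommGroup H] [InnerProductSpace ℝ H]
    (p A R C C' M : ℝ) (hp : 1 ≤ p) (hA : 0 < A) (hR : 0 < R) (hC : 0 < C) (hC' : 0 < C')
    (hM : 0 < M)
    (hfM : (C' * (2 * R) ^ p * p) * M ^ (p - 1) - M + (C * A) ≤ 0)
    (w : ℕ → H) (hw1 : w 1 = 0)
    (hrec : ∀ t : ℕ, 1 ≤ t → ∃ (u Φ : H) (μ : ℝ),
      ‖u‖ ≤ A ∧ ‖Φ‖ ≤ 2 * R ∧ μ ∈ Set.Icc (0 : ℝ) 1 ∧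
      w (t + 1) = (((t : ℝ) - 1) / ((t : ℝ) + 1)) • w t
        - (2 * C / ((t : ℝ) + 1)) • u
        - ((2 * C' * μ / ((t : ℝ) + 1)) * (p * Real.sign ⟪w t, Φ⟫ * |⟪w t, Φ⟫| ^ (p - 1))) • Φ) :
    ∀ t : ℕ, 1 ≤ t → ‖w t‖ ≤ M := by
  have hp1 : (0:ℝ) ≤ p - 1 := by linarith
  have hK : C * A + C' * (2 * R) ^ p * p * M ^ (p - 1) ≤ M := by linarith
  intro t ht
  induction t with
  | zero => omega
  | succ n ih =>
    rcases Nat.lt_or_ge n 1 with hn | hn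
    · interval_cases n
      rw [hw1]
      simpa using hM.le
    · have ihn := ih hn
      obtain ⟨u, Φ, μ, hu, hΦ, hμ, heq⟩ := hrec n hn
      have ht1 : (1:ℝ) ≤ (n:ℝ) := by exact_mod_cast hn
      have hden : (0:ℝ) < (n:ℝ) + 1 := by linarith
      have hRpos : (0:ℝ) < 2 * R := by linarith
      set s : ℝ := Real.sign ⟪w n, Φ⟫ with hs
      set x : ℝ := |⟪w n, Φ⟫| ^ (p - 1) with hxdef
      have hip : |⟪w n, Φ⟫| ≤ 2 * R * M := by
        calc |⟪w n, Φ⟫| ≤ ‖w n‖ * ‖Φ‖ := abs_real_inner_le_norm _ _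
          _ ≤ M * (2 * R) := mul_le_mul ihn hΦ (norm_nonneg _) hM.le
          _ = 2 * R * M := by ring
      have hxpow : x ≤ (2 * R) ^ (p - 1) * M ^ (p - 1) := by
        rw [hxdef, ← Real.mul_rpow hRpos.le hM.le]
        exact Real.rpow_le_rpow (abs_nonneg _) hip hp1
      have hxnn : (0:ℝ) ≤ x := Real.rpow_nonneg (abs_nonneg _) _
      have hsign : |s| ≤ 1 := by
        rcases Real.sign_apply_eq ⟪w n, Φ⟫ with h | h | h <;> rw [hs, h] <;> norm_num
      have hμ0 := hμ.1
      have hμ1 := hμ.2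
      have hfrac : (0:ℝ) ≤ ((n:ℝ) - 1) / ((n:ℝ) + 1) :=
        div_nonneg (by linarith) (by linarith)
      have h1 : ‖(((n : ℝ) - 1) / ((n : ℝ) + 1)) • w n‖
          ≤ (((n : ℝ) - 1) / ((n : ℝ) + 1)) * M := by
        rw [norm_smul, Real.norm_eq_abs, abs_of_nonneg hfrac]
        exact mul_le_mul_of_nonneg_left ihn hfrac
      have h2 : ‖(2 * C / ((n : ℝ) + 1)) • u‖ ≤ (2 * C / ((n : ℝ) + 1)) * A := by
        rw [norm_smul, Real.norm_eq_abs, abs_of_nonneg (by positivity)]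
        exact mul_le_mul_of_nonneg_left hu (by positivity)
      have hpowsplit : (2 * R) ^ (p - 1) * (2 * R) = (2 * R) ^ p := by
        rw [← Real.rpow_add_one hRpos.ne' (p - 1)]
        ring_nf
      have e1 : |2 * C' * μ / ((n : ℝ) + 1)| ≤ 2 * C' / ((n : ℝ) + 1) := by
        rw [abs_of_nonneg (by positivity)]
        have h2C : 2 * C' * μ ≤ 2 * C' := by nlinarith
        exact div_le_div_of_nonneg_right h2C hden.le
      have e2 : |p * s * x| ≤ p * ((2 * R) ^ (p - 1) * M ^ (p - 1)) := by
        rw [abs_mul, abs_mul, abs_of_nonneg (by linarith : (0:ℝ) ≤ p), abs_of_nonneg hxnn]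
        calc p * |s| * x ≤ p * 1 * ((2 * R) ^ (p - 1) * M ^ (p - 1)) := by
              apply mul_le_mul (mul_le_mul_of_nonneg_left hsign (by linarith)) hxpow hxnn
              positivity
          _ = p * ((2 * R) ^ (p - 1) * M ^ (p - 1)) := by ring
      have h3 : ‖((2 * C' * μ / ((n : ℝ) + 1)) * (p * s * x)) • Φ‖
          ≤ (2 * C' / ((n : ℝ) + 1)) * (p * ((2 * R) ^ p * M ^ (p - 1))) := by
        rw [norm_smul, Real.norm_eq_abs, abs_mul]
        calc |2 * C' * μ / ((n : ℝ) + 1)| * |p * s * x| * ‖Φ‖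
            ≤ (2 * C' / ((n : ℝ) + 1)) * (p * ((2 * R) ^ (p - 1) * M ^ (p - 1))) * (2 * R) := by
              apply mul_le_mul _ hΦ (norm_nonneg _) (by positivity)
              exact mul_le_mul e1 e2 (abs_nonneg _) (by positivity)
          _ = (2 * C' / ((n : ℝ) + 1)) * (p * (((2 * R) ^ (p - 1) * (2 * R)) * M ^ (p - 1))) := by
              ring
          _ = (2 * C' / ((n : ℝ) + 1)) * (p * ((2 * R) ^ p * M ^ (p - 1))) := by
              rw [hpowsplit]
      have htri : ‖w (n + 1)‖ ≤ (((n : ℝ) - 1) / ((n : ℝ) + 1)) * M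
          + (2 * C / ((n : ℝ) + 1)) * A
          + (2 * C' / ((n : ℝ) + 1)) * (p * ((2 * R) ^ p * M ^ (p - 1))) := by
        rw [heq]
        refine (norm_sub_le _ _).trans ?_
        refine le_trans (add_le_add_left (norm_sub_le _ _) _) ?_
        exact add_le_add (add_le_add h1 h2) h3
      refine htri.trans ?_
      rw [div_mul_eq_mul_div, div_mul_eq_mul_div, div_mul_eq_mul_div,
        ← add_div, ← add_div, div_le_iff₀ hden]
      nlinarith [hK]
end

section
/- Let G ≥ 0 be a real number, T ≥ 1 an integer, and let (e_t)_{1≤t≤T} and (d_t)_{1≤t≤T+1} be real sequences with d_t ≥ 0 for all t. Suppose that for every t with 1 ≤ t ≤ T, e_t ≤ (1/(2η_t) − 1/2)·d_t − (1/(2η_t))·d_{t+1} + G²·η_t/2, where η_t = 2/(t+1). Then (2/(T(T+1))) · Σ_{t=1}^{T} t·e_t ≤ 2G²/T. -/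
theorem stmt_7 (G : ℝ) (hG : 0 ≤ G) (T : ℕ) (hT : 1 ≤ T)
    (e d : ℕ → ℝ) (hd : ∀ t : ℕ, 1 ≤ t → t ≤ T + 1 → 0 ≤ d t)
    (hstep : ∀ t : ℕ, 1 ≤ t → t ≤ T →
      e t ≤ (1 / (2 * (2 / ((t : ℝ) + 1))) - 1 / 2) * d t
        - (1 / (2 * (2 / ((t : ℝ) + 1)))) * d (t + 1)
        + G ^ 2 * (2 / ((t : ℝ) + 1)) / 2) :
    (2 / ((T : ℝ) * ((T : ℝ) + 1))) * ∑ t ∈ Finset.Icc 1 T, (t : ℝ) * e t ≤ 2 * G ^ 2 / T := by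
  set f : ℕ → ℝ := fun k => (k : ℝ) * ((k : ℝ) - 1) / 4 * d k with hf
  have key : ∀ n : ℕ, 1 ≤ n → n ≤ T →
      ∑ t ∈ Finset.Icc 1 n, (t : ℝ) * e t ≤ G ^ 2 * n - f (n + 1) := by
    intro n hn1 hnT
    induction n with
    | zero => omega
    | succ m ih =>
      rcases Nat.eq_zero_or_pos m with hm | hm
      · subst hm
        simp only [Finset.Icc_self, Finset.sum_singleton]
        have h1 := hstep 1 le_rfl hT
        have hd2 : (0:ℝ) ≤ d 2 := hd 2 (by omega) (by omega)
        simp only [hf]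
        push_cast
        nlinarith [sq_nonneg G]
      · have hmT : m ≤ T := by omega
        have ihm := ih hm hmT
        rw [Finset.sum_Icc_succ_top (by omega : 1 ≤ m + 1)]
        have hs := hstep (m + 1) (by omega) hnT
        have hdn : (0:ℝ) ≤ d (m + 2) := hd (m + 2) (by omega) (by omega)
        have hmc : (1:ℝ) ≤ (m:ℝ) := by exact_mod_cast hm
        have hmul : ((m:ℝ) + 1) * e (m + 1) ≤ f (m + 1) - f (m + 2) + G ^ 2 := by
          have hpos : (0:ℝ) < (m:ℝ) + 1 + 1 := by linarith
          have hs' : ((m:ℝ) + 1) * e (m + 1) ≤ ((m:ℝ) + 1) *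
              ((1 / (2 * (2 / ((m:ℝ) + 1 + 1))) - 1 / 2) * d (m + 1)
               - (1 / (2 * (2 / ((m:ℝ) + 1 + 1)))) * d (m + 2)
               + G ^ 2 * (2 / ((m:ℝ) + 1 + 1)) / 2) := by
            apply mul_le_mul_of_nonneg_left _ (by linarith)
            convert hs using 3
            · rfl
            all_goals (push_cast; ring)
          refine hs'.trans ?_
          simp only [hf]
          push_cast
          have h4 : 1 / (2 * (2 / ((m:ℝ) + 1 + 1))) = ((m:ℝ) + 2) / 4 := by
            field_simp; ring
          have h5 : G ^ 2 * (2 / ((m:ℝ) + 1 + 1)) / 2 = G ^ 2 / ((m:ℝ) + 2) := by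
            field_simp; ring
          rw [h4, h5]
          have h6 : ((m:ℝ) + 1) * (G ^ 2 / ((m:ℝ) + 2)) ≤ G ^ 2 := by
            rw [← mul_div_assoc, div_le_iff₀ (by linarith)]
            nlinarith [sq_nonneg G]
          nlinarith [h6, hdn]
        push_cast
        push_cast at ihm
        linarith
  have hkey := key T hT le_rfl
  have hfT : 0 ≤ f (T + 1) := by
    have := hd (T + 1) (by omega) le_rfl
    simp only [hf]
    push_cast
    have h0 : (0:ℝ) ≤ (T:ℝ) := Nat.cast_nonneg T
    have heq : ((T:ℝ)+1) * ((T:ℝ)+1-1) / 4 * d (T+1) = ((T:ℝ)+1) * (T:ℝ) / 4 * d (T+1) := by ring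
    rw [heq]
    positivity
  have hT1 : (1:ℝ) ≤ (T:ℝ) := by exact_mod_cast hT
  have hsum : ∑ t ∈ Finset.Icc 1 T, (t : ℝ) * e t ≤ G ^ 2 * T := by linarith
  have hpos : (0:ℝ) < (T:ℝ) * ((T:ℝ) + 1) := by nlinarith
  rw [div_mul_eq_mul_div, div_le_div_iff₀ hpos (by linarith)]
  nlinarith [sq_nonneg G]
end

section
/- Let H be a real inner product space, let J : H → ℝ be a convex function, let w* ∈ H satisfy J(w*) ≤ J(w) for all w ∈ H, and let h : H → ℝ be a convex function with J(w) = ½‖w‖² + h(w) such that h has a gradient at w* (i.e., h is Fréchet differentiable at w*). Let G > 0 be a real number, T ≥ 1 an integer, and (w_t)_{1≤t≤T+1} a sequence in H such that, setting d_t = ‖w_t − w*‖², e_t = J(w_t) − J(w*), and η_t = 2/(t+1), for every 1 ≤ t ≤ T one has e_t ≤ (1/(2η_t) − 1/2)·d_t − (1/(2η_t))·d_{t+1} + G²·η_t/2. Then the weighted average w̄_{T+1} = (2/(T(T+1)))·Σ_{t=1}^{T} t·w_t satisfies ‖w̄_{T+1} − w*‖² ≤ 4G²/T. -/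
open RealInnerProductSpace

private lemma subgrad_ineq {H : Type*} [NormedAddCommGroup H] [InnerProductSpace ℝ H]
    (h : H → ℝ) (hconv : ConvexOn ℝ Set.univ h) (x g : H)
    (hd : HasFDerivAt h (innerSL ℝ g) x) (y : H) :
    ⟪g, y - x⟫ ≤ h y - h x := by
  set v := y - x with hv
  have hcurve : HasDerivAt (fun s : ℝ => x + s • v) v 0 := by
    simpa using ((hasDerivAt_id (0:ℝ)).smul_const v).const_add x
  have hd0 : HasFDerivAt h (innerSL ℝ g) (x + (0:ℝ) • v) := by simpa using hd
  have hphi : HasDerivAt (fun s : ℝ => h (x + s • v)) ⟪g, v⟫ 0 := by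
    have := hd0.comp_hasDerivAt (0:ℝ) hcurve
    simpa [Function.comp_def] using this
  have htend := hasDerivAt_iff_tendsto_slope.mp hphi
  have htend' : Filter.Tendsto (slope (fun s : ℝ => h (x + s • v)) 0) (nhdsWithin 0 (Set.Ioi 0))
      (nhds ⟪g, v⟫) :=
    htend.mono_left (nhdsWithin_mono 0 (fun s hs => ne_of_gt hs))
  refine le_of_tendsto htend' ?_
  filter_upwards [Ioc_mem_nhdsGT_of_mem (Set.mem_Ico.mpr ⟨le_refl (0:ℝ), one_pos⟩)] with s hs
  obtain ⟨hs0, hs1⟩ := hs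
  have hcomb : h (x + s • v) ≤ (1 - s) * h x + s * h y := by
    have h1 : x + s • v = (1 - s) • x + s • y := by
      rw [hv]; module
    rw [h1]
    exact hconv.2 (Set.mem_univ x) (Set.mem_univ y) (by linarith) (le_of_lt hs0) (by ring)
  have : slope (fun s : ℝ => h (x + s • v)) 0 s = (h (x + s • v) - h x) / s := by
    simp [slope_def_field]
  rw [this, div_le_iff₀ hs0]
  have h0 : h (x + (0:ℝ) • v) = h x := by simp
  nlinarith [hcomb]

set_option maxHeartbeats 1000000 in
theorem stmt_15 {H : Type*} [NormedAddCommGroup H] [InnerProductSpace ℝ H]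
    (J : H → ℝ) (hJconv : ConvexOn ℝ Set.univ J)
    (wstar : H) (hmin : ∀ w : H, J wstar ≤ J w)
    (h : H → ℝ) (hconv : ConvexOn ℝ Set.univ h)
    (hJ : ∀ x, J x = (1 / 2) * ‖x‖ ^ 2 + h x)
    (gstar : H) (hderiv : HasFDerivAt h (innerSL ℝ gstar) wstar)
    (G : ℝ) (hG : 0 < G) (T : ℕ) (hT : 1 ≤ T)
    (w : ℕ → H)
    (hstep : ∀ t : ℕ, 1 ≤ t → t ≤ T →
      J (w t) - J wstar ≤ (1 / (2 * (2 / ((t : ℝ) + 1))) - 1 / 2) * ‖w t - wstar‖ ^ 2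
        - (1 / (2 * (2 / ((t : ℝ) + 1)))) * ‖w (t + 1) - wstar‖ ^ 2
        + G ^ 2 * (2 / ((t : ℝ) + 1)) / 2) :
    ‖(2 / ((T : ℝ) * ((T : ℝ) + 1))) • (∑ t ∈ Finset.Icc 1 T, (t : ℝ) • w t) - wstar‖ ^ 2
      ≤ 4 * G ^ 2 / T := by
  have hTpos : (0:ℝ) < T := by exact_mod_cast hT
  have hT1pos : (0:ℝ) < (T:ℝ) + 1 := by linarith
  -- Step A: gstar = -wstar
  have hfun : J = fun x => (1 / 2) * ‖x‖ ^ 2 + h x := funext hJ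
  have hJd : HasFDerivAt J ((1/2:ℝ) • (2 • innerSL ℝ wstar) + innerSL ℝ gstar) wstar := by
    rw [hfun]
    exact (((hasStrictFDerivAt_norm_sq wstar).hasFDerivAt).const_mul (1/2:ℝ)).add hderiv
  have hloc : IsLocalMin J wstar := Filter.Eventually.of_forall hmin
  have hzero := hloc.hasFDerivAt_eq_zero hJd
  have hgs : gstar = -wstar := by
    have hv : ∀ v : H, ⟪wstar, v⟫ + ⟪gstar, v⟫ = 0 := by
      intro v
      have := DFunLike.congr_fun hzero v
      simp only [ContinuousLinearMap.add_apply, ContinuousLinearMap.smul_apply,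
        ContinuousLinearMap.zero_apply, innerSL_apply_apply, smul_eq_mul, nsmul_eq_mul, Nat.cast_ofNat] at this
      linarith [this]
    have h2 : ⟪wstar + gstar, wstar + gstar⟫ = 0 := by
      rw [inner_add_left, hv (wstar + gstar)]
    have h3 : wstar + gstar = 0 := inner_self_eq_zero.mp h2
    exact eq_neg_of_add_eq_zero_right h3
  -- Step B: strong convexity at wstar
  have hstrong : ∀ y : H, (1/2) * ‖y - wstar‖ ^ 2 ≤ J y - J wstar := by
    intro y
    have hsub := subgrad_ineq h hconv wstar gstar hderiv y
    rw [hgs] at hsub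
    have hexp : ‖y - wstar‖ ^ 2 = ‖y‖ ^ 2 - 2 * ⟪wstar, y⟫ + ‖wstar‖ ^ 2 := by
      rw [@norm_sub_sq_real, real_inner_comm]
    have hinner : ⟪-wstar, y - wstar⟫ = -⟪wstar, y⟫ + ‖wstar‖ ^ 2 := by
      rw [inner_neg_left, inner_sub_right, real_inner_self_eq_norm_sq]; ring
    rw [hJ y, hJ wstar]
    rw [hinner] at hsub
    nlinarith [hsub]
  -- abbreviations
  set d : ℕ → ℝ := fun t => ‖w t - wstar‖ ^ 2 with hd
  set e : ℕ → ℝ := fun t => J (w t) - J wstar with he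
  have hdnonneg : ∀ t, 0 ≤ d t := fun t => by positivity
  set c : ℕ → ℝ := fun s => ((s:ℝ) * ((s:ℝ) - 1) / 4) * d s with hc
  -- Step C: per-step bound
  have key : ∀ t : ℕ, 1 ≤ t → t ≤ T → (t:ℝ) * e t ≤ c t - c (t+1) + G ^ 2 := by
    intro t ht1 htT
    have htpos : (0:ℝ) < (t:ℝ) + 1 := by positivity
    have hs := hstep t ht1 htT
    have h1 : 1 / (2 * (2 / ((t:ℝ) + 1))) = ((t:ℝ) + 1) / 4 := by
      rw [div_eq_div_iff (by positivity) (by norm_num)]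
      field_simp
      norm_num
    rw [h1] at hs
    have hmul := mul_le_mul_of_nonneg_left hs (by positivity : (0:ℝ) ≤ (t:ℝ))
    have heq : (t:ℝ) * ((((t:ℝ) + 1) / 4 - 1 / 2) * d t - (((t:ℝ) + 1) / 4) * d (t+1)
        + G ^ 2 * (2 / ((t:ℝ) + 1)) / 2)
        = c t - c (t+1) + G ^ 2 * ((t:ℝ) / ((t:ℝ) + 1)) := by
      simp only [hc]
      push_cast
      ring
    have hfrac : G ^ 2 * ((t:ℝ) / ((t:ℝ) + 1)) ≤ G ^ 2 := by
      have h2 : (t:ℝ) / ((t:ℝ) + 1) ≤ 1 := by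
        rw [div_le_one htpos]; linarith
      exact mul_le_of_le_one_right (sq_nonneg G) h2
    calc (t:ℝ) * e t ≤ (t:ℝ) * ((((t:ℝ) + 1) / 4 - 1 / 2) * d t
          - (((t:ℝ) + 1) / 4) * d (t+1) + G ^ 2 * (2 / ((t:ℝ) + 1)) / 2) := hmul
      _ = c t - c (t+1) + G ^ 2 * ((t:ℝ) / ((t:ℝ) + 1)) := heq
      _ ≤ c t - c (t+1) + G ^ 2 := by linarith
  -- telescoping sum
  have hsum : ∑ t ∈ Finset.Icc 1 T, (t:ℝ) * e t ≤ (T:ℝ) * G ^ 2 := by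
    have h1 : ∑ t ∈ Finset.Icc 1 T, (t:ℝ) * e t
        ≤ ∑ t ∈ Finset.Icc 1 T, (c t - c (t+1) + G ^ 2) := by
      apply Finset.sum_le_sum
      intro t ht
      rw [Finset.mem_Icc] at ht
      exact key t ht.1 ht.2
    have h2 : ∑ t ∈ Finset.Icc 1 T, (c t - c (t+1)) = c 1 - c (T+1) := by
      rw [show Finset.Icc 1 T = Finset.Ico 1 (T+1) by rw [Finset.Ico_add_one_right_eq_Icc],
        Finset.sum_Ico_eq_sum_range]
      simp only [Nat.add_sub_cancel]
      have := Finset.sum_range_sub' (fun i => c (1 + i)) T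
      simpa [Nat.add_comm] using this
    have h3 : (c 1 : ℝ) = 0 := by simp [hc]
    have h4 : 0 ≤ c (T+1) := by
      apply mul_nonneg _ (hdnonneg _)
      push_cast
      nlinarith [hTpos]
    have h5 : ∑ t ∈ Finset.Icc 1 T, (c t - c (t+1) + G ^ 2)
        = (c 1 - c (T+1)) + (T:ℝ) * G ^ 2 := by
      rw [Finset.sum_add_distrib, h2, Finset.sum_const, Nat.card_Icc,
        Nat.add_sub_cancel, nsmul_eq_mul]
    rw [h5] at h1
    nlinarith [h1]
  -- Gauss sum
  have hGaussAll : ∀ n : ℕ, ∑ t ∈ Finset.Icc 1 n, (t:ℝ) = (n:ℝ) * ((n:ℝ) + 1) / 2 := by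
    intro n
    induction n with
    | zero => simp
    | succ m ih =>
      rw [Finset.sum_Icc_succ_top (Nat.succ_le_succ (Nat.zero_le m)), ih]
      push_cast; ring
  have hGauss := hGaussAll T
  -- Jensen
  set lam : ℕ → ℝ := fun t => 2 / ((T:ℝ) * ((T:ℝ) + 1)) * (t:ℝ) with hlam
  have hlamnn : ∀ t ∈ Finset.Icc 1 T, 0 ≤ lam t := by
    intro t _; apply mul_nonneg (by positivity) (by positivity)
  have hlamsum : ∑ t ∈ Finset.Icc 1 T, lam t = 1 := by
    rw [hlam, ← Finset.mul_sum, hGauss]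
    field_simp
  have hbar : (2 / ((T : ℝ) * ((T : ℝ) + 1))) • (∑ t ∈ Finset.Icc 1 T, (t : ℝ) • w t)
      = ∑ t ∈ Finset.Icc 1 T, lam t • w t := by
    rw [Finset.smul_sum]
    apply Finset.sum_congr rfl
    intro t _
    rw [smul_smul]
  have hjensen := hJconv.map_sum_le hlamnn hlamsum (fun t _ => Set.mem_univ (w t))
  rw [← hbar] at hjensen
  set wbar := (2 / ((T : ℝ) * ((T : ℝ) + 1))) • (∑ t ∈ Finset.Icc 1 T, (t : ℝ) • w t) with hwbar
  have hJbar : J wbar - J wstar ≤ 2 * G ^ 2 / ((T:ℝ) + 1) := by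
    have h1 : ∑ t ∈ Finset.Icc 1 T, lam t * J (w t)
        = ∑ t ∈ Finset.Icc 1 T, lam t * e t + J wstar := by
      have : ∀ t, lam t * J (w t) = lam t * e t + lam t * J wstar := by
        intro t; simp only [he]; ring
      rw [Finset.sum_congr rfl (fun t _ => this t), Finset.sum_add_distrib,
        ← Finset.sum_mul, hlamsum, one_mul]
    have h2 : ∑ t ∈ Finset.Icc 1 T, lam t * e t
        = 2 / ((T:ℝ) * ((T:ℝ) + 1)) * ∑ t ∈ Finset.Icc 1 T, (t:ℝ) * e t := by
      rw [Finset.mul_sum]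
      apply Finset.sum_congr rfl
      intro t _
      rw [hlam]; ring
    have h3 : 2 / ((T:ℝ) * ((T:ℝ) + 1)) * ∑ t ∈ Finset.Icc 1 T, (t:ℝ) * e t
        ≤ 2 / ((T:ℝ) * ((T:ℝ) + 1)) * ((T:ℝ) * G ^ 2) :=
      mul_le_mul_of_nonneg_left hsum (by positivity)
    have h4 : 2 / ((T:ℝ) * ((T:ℝ) + 1)) * ((T:ℝ) * G ^ 2) = 2 * G ^ 2 / ((T:ℝ) + 1) := by
      field_simp
    have h6 := hjensen
    simp only [smul_eq_mul] at h6
    rw [h1, h2] at h6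
    have h5 := h3
    rw [h4] at h5
    linarith [h5, h6]
  have hfinal := hstrong wbar
  have hlast : 4 * G ^ 2 / ((T:ℝ) + 1) ≤ 4 * G ^ 2 / (T:ℝ) := by
    apply div_le_div_of_nonneg_left (by positivity) hTpos (by linarith)
  have h7 : 4 * G ^ 2 / ((T:ℝ) + 1) = 2 * (2 * G ^ 2 / ((T:ℝ) + 1)) := by ring
  calc ‖wbar - wstar‖ ^ 2 ≤ 2 * (J wbar - J wstar) := by linarith [hfinal]
    _ ≤ 4 * G ^ 2 / ((T:ℝ) + 1) := by linarith [hJbar, h7]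
    _ ≤ 4 * G ^ 2 / (T:ℝ) := hlast
end
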